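/- There exists an absolute constant C > 0 such that for all complex numbers z₁, z₂, w₁, w₂, each having real part ≥ −1/2, one has (1+|z₁+conj(w₁)|)·(1+|z₂+conj(w₂)|) ≤ C·(1+|z₁+z₂|)·(1+|z₁+w₂|)·(1+|w₁+z₂|)·(1+|w₁+w₂|), where conj denotes complex conjugation. -/

import Mathlib

open Complex

private lemma pivot_bound (z w p : ℂ) (hz : -(1 / 2) ≤ z.re) (hw : -(1 / 2) ≤ w.re)
    (hp : -(1 / 2) ≤ p.re) :
    1 + ‖z + (starRingEnd ℂ) w‖ ≤ 2 * ((1 + ‖z + p‖) * (1 + ‖w + p‖)) := by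
  have habs : ‖z + (starRingEnd ℂ) w‖ ≤
      |(z + (starRingEnd ℂ) w).re| + |(z + (starRingEnd ℂ) w).im| := by
    exact Complex.norm_le_abs_re_add_abs_im _
  have hre : (z + (starRingEnd ℂ) w).re = z.re + w.re := by simp
  have him : (z + (starRingEnd ℂ) w).im = z.im - w.im := by simp; ring
  rw [hre, him] at habs
  have h1 : |(z + p).re| ≤ ‖z + p‖ := by
    exact Complex.abs_re_le_norm _
  have h2 : |(w + p).re| ≤ ‖w + p‖ := by
    exact Complex.abs_re_le_norm _
  have h3 : |(z + p).im| ≤ ‖z + p‖ := by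
    exact Complex.abs_im_le_norm _
  have h4 : |(w + p).im| ≤ ‖w + p‖ := by
    exact Complex.abs_im_le_norm _
  simp only [Complex.add_re, Complex.add_im] at h1 h2 h3 h4
  rw [abs_le] at h1 h2 h3 h4
  have hn1 : (0:ℝ) ≤ ‖z + p‖ := norm_nonneg _
  have hn2 : (0:ℝ) ≤ ‖w + p‖ := norm_nonneg _
  have hA : |z.re + w.re| ≤ ‖z + p‖ + ‖w + p‖ + 1 := by
    rw [abs_le]; constructor <;> nlinarith [h1.1, h1.2, h2.1, h2.2]
  have hB : |z.im - w.im| ≤ ‖z + p‖ + ‖w + p‖ := by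
    rw [abs_le]; constructor <;> nlinarith [h3.1, h3.2, h4.1, h4.2]
  nlinarith [habs, hA, hB, mul_nonneg hn1 hn2]

theorem one_add_abs_conj_bound :
    ∃ C : ℝ, 0 < C ∧ ∀ z₁ z₂ w₁ w₂ : ℂ,
      -(1 / 2) ≤ z₁.re → -(1 / 2) ≤ z₂.re → -(1 / 2) ≤ w₁.re → -(1 / 2) ≤ w₂.re →
      (1 + ‖z₁ + (starRingEnd ℂ) w₁‖) * (1 + ‖z₂ + (starRingEnd ℂ) w₂‖) ≤
        C * (1 + ‖z₁ + z₂‖) * (1 + ‖z₁ + w₂‖) * (1 + ‖w₁ + z₂‖) * (1 + ‖w₁ + w₂‖) := by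
  refine ⟨4, by norm_num, fun z₁ z₂ w₁ w₂ h1 h2 h3 h4 => ?_⟩
  set X := 1 + ‖z₁ + (starRingEnd ℂ) w₁‖ with hX
  set Y := 1 + ‖z₂ + (starRingEnd ℂ) w₂‖ with hY
  set A := 1 + ‖z₁ + z₂‖ with hA
  set B := 1 + ‖z₁ + w₂‖ with hB
  set Cc := 1 + ‖w₁ + z₂‖ with hCc
  set D := 1 + ‖w₁ + w₂‖ with hD
  have bX1 : X ≤ 2 * (A * Cc) := pivot_bound z₁ w₁ z₂ h1 h3 h2
  have bX2 : X ≤ 2 * (B * D) := pivot_bound z₁ w₁ w₂ h1 h3 h4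
  have bY1 : Y ≤ 2 * (A * B) := by
    have := pivot_bound z₂ w₂ z₁ h2 h4 h1
    rwa [add_comm z₂ z₁, add_comm w₂ z₁] at this
  have bY2 : Y ≤ 2 * (Cc * D) := by
    have := pivot_bound z₂ w₂ w₁ h2 h4 h3
    rwa [add_comm z₂ w₁, add_comm w₂ w₁] at this
  have hX0 : (1:ℝ) ≤ X := by simp [hX, norm_nonneg]
  have hY0 : (1:ℝ) ≤ Y := by simp [hY, norm_nonneg]
  have hA0 : (0:ℝ) < A := by have := norm_nonneg (z₁ + z₂); linarith
  have hB0 : (0:ℝ) < B := by have := norm_nonneg (z₁ + w₂); linarith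
  have hC0 : (0:ℝ) < Cc := by have := norm_nonneg (w₁ + z₂); linarith
  have hD0 : (0:ℝ) < D := by have := norm_nonneg (w₁ + w₂); linarith
  have hsq : (X * Y) * (X * Y) ≤ (4 * A * B * Cc * D) * (4 * A * B * Cc * D) := by
    calc (X * Y) * (X * Y) = (X * Y) * (X * Y) := rfl
      _ ≤ (2 * (A * Cc) * (2 * (A * B))) * (2 * (B * D) * (2 * (Cc * D))) := by
          apply mul_le_mul
          · exact mul_le_mul bX1 bY1 (by linarith) (by positivity)
          · exact mul_le_mul bX2 bY2 (by linarith) (by positivity)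
          · nlinarith
          · positivity
      _ = (4 * A * B * Cc * D) * (4 * A * B * Cc * D) := by ring
  nlinarith [hsq, mul_pos (mul_pos (mul_pos hA0 hB0) hC0) hD0, hX0, hY0]
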